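/- Define coefficients a_ν^{(n)} for 1 ≤ ν ≤ n by a_1^{(n)} = (-1)^{n+1}(2n-3)!!, a_n^{(n)} = 1, and a_ν^{(n+1)} = -(2n-ν) a_ν^{(n)} + a_{ν-1}^{(n)} for 2 ≤ ν ≤ n. Then for every n ≥ 1 and fixed x_0 ∈ R, D_r(n){cos(x_0 r)} = Σ_{ν=1}^n a_ν^{(n)} (x_0^ν / r^{2n-ν}) cos(x_0 r + νπ/2) as functions of r ∈ (0,∞). -/

import Mathlib

/-- `Dr n f = ((1/r) d/dr)^n f`, the `n`-fold composition of `f ↦ (1/r) f'`. -/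
noncomputable def Dr : ℕ → (ℝ → ℝ) → (ℝ → ℝ)
  | 0, f => f
  | n + 1, f => fun r => (1 / r) * deriv (Dr n f) r

/-- `Dsup n`, i.e. `D^r(n)`: `D^r(0){f} = f`, `D^r(n){f} = d/dr (D^r(n-1){f} / r)`. -/
noncomputable def Dsup : ℕ → (ℝ → ℝ) → (ℝ → ℝ)
  | 0, f => f
  | n + 1, f => fun r => deriv (fun s => Dsup n f s / s) r

open scoped Nat Real

private lemma sum_shift (n : ℕ) (f : ℕ → ℝ) :
    ∑ ν ∈ Finset.Icc 1 n, f (ν + 1) = ∑ μ ∈ Finset.Icc 2 (n + 1), f μ := by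
  induction n with
  | zero => simp
  | succ m ih =>
      rw [Finset.sum_Icc_succ_top (a := 1) (b := m) (by omega),
        Finset.sum_Icc_succ_top (a := 2) (b := m + 1) (by omega), ih]

private lemma df_step (n : ℕ) (hn : 1 ≤ n) : (2*(n+1)-3)‼ = (2*n-1) * (2*n-3)‼ := by
  rcases n with _ | _ | m
  · omega
  · decide
  · have h : 2*((m+2)+1) - 3 = (2*(m+2)-3) + 2 := by omega
    rw [h, Nat.doubleFactorial_add_two]
    have h2 : 2*(m+2)-3+2 = 2*(m+1+1)-1 := by omega
    have h3 : 2*(m+2)-3 = 2*(m+1+1)-3 := by omega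
    rw [h2, h3]

private lemma hasDerivAt_aux (c p x₀ θ r : ℝ) (k : ℕ) (hk : 1 ≤ k) (hr : r ≠ 0) :
    HasDerivAt (fun s : ℝ => c * (p / s ^ k) * Real.cos (x₀ * s + θ))
      (c * p * (-x₀ * Real.sin (x₀ * r + θ)) / r ^ k
        - c * p * (↑k * Real.cos (x₀ * r + θ)) / r ^ (k + 1)) r := by
  obtain ⟨m, rfl⟩ : ∃ m, k = m + 1 := ⟨k - 1, by omega⟩
  have h1 : HasDerivAt (fun s : ℝ => x₀ * s + θ) x₀ r := by
    simpa using ((hasDerivAt_id r).const_mul x₀).add_const θ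
  have h2 : HasDerivAt (fun s : ℝ => Real.cos (x₀ * s + θ))
      (-Real.sin (x₀ * r + θ) * x₀) r := (Real.hasDerivAt_cos _).comp r h1
  have h3 : HasDerivAt (fun s : ℝ => (s ^ (m+1))⁻¹)
      (-(↑(m+1) * r ^ m) / (r ^ (m+1)) ^ 2) r := by
    simpa using (hasDerivAt_pow (m+1) r).fun_inv (pow_ne_zero _ hr)
  have h4 := ((h3.const_mul (c * p)).fun_mul h2)
  have hfun : (fun s : ℝ => c * (p / s ^ (m+1)) * Real.cos (x₀ * s + θ))
      = fun s : ℝ => (c * p) * (s ^ (m+1))⁻¹ * Real.cos (x₀ * s + θ) := by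
    funext s; ring
  rw [hfun]
  convert h4 using 1
  · rfl
  · rfl
  have hrm : r ^ m ≠ 0 := pow_ne_zero _ hr
  field_simp
  ring

theorem Dr_cos (a : ℕ → ℕ → ℝ)
    (ha1 : ∀ n, 1 ≤ n → a n 1 = (-1 : ℝ) ^ (n + 1) * (2 * n - 3)‼)
    (hann : ∀ n, 1 ≤ n → a n n = 1)
    (harec : ∀ n ν, 2 ≤ ν → ν ≤ n →
      a (n + 1) ν = -(2 * (n : ℝ) - ν) * a n ν + a n (ν - 1))
    (n : ℕ) (hn : 1 ≤ n) (x₀ : ℝ) :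
    ∀ r ∈ Set.Ioi (0 : ℝ),
      Dr n (fun s => Real.cos (x₀ * s)) r =
        ∑ ν ∈ Finset.Icc 1 n,
          a n ν * (x₀ ^ ν / r ^ (2 * n - ν)) * Real.cos (x₀ * r + ν * π / 2) := by
  induction n with
  | zero => exact absurd hn (by norm_num)
  | succ n IH =>
    intro r hr
    have hrpos : (0:ℝ) < r := hr
    have hrne : r ≠ 0 := ne_of_gt hrpos
    rcases Nat.eq_zero_or_pos n with h0 | hpos
    · subst h0
      simp only [Dr]
      have h1 : HasDerivAt (fun s : ℝ => x₀ * s) x₀ r := by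
        simpa using (hasDerivAt_id r).const_mul x₀
      have hd : HasDerivAt (fun s : ℝ => Real.cos (x₀ * s)) (-Real.sin (x₀ * r) * x₀) r :=
        (Real.hasDerivAt_cos _).comp r h1
      rw [hd.deriv, Finset.Icc_self, Finset.sum_singleton, hann 1 le_rfl]
      have hc : x₀ * r + ((1:ℕ):ℝ) * π / 2 = x₀ * r + π / 2 := by push_cast; ring
      rw [hc, Real.cos_add_pi_div_two]
      norm_num
      field_simp
    · have IH' := IH hpos
      have hev : Dr n (fun s => Real.cos (x₀ * s)) =ᶠ[nhds r]
          (fun s => ∑ ν ∈ Finset.Icc 1 n,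
            a n ν * (x₀ ^ ν / s ^ (2 * n - ν)) * Real.cos (x₀ * s + ν * π / 2)) := by
        filter_upwards [isOpen_Ioi.mem_nhds hr] with s hs
        exact IH' s hs
      have hD : HasDerivAt (fun s => ∑ ν ∈ Finset.Icc 1 n,
            a n ν * (x₀ ^ ν / s ^ (2 * n - ν)) * Real.cos (x₀ * s + ν * π / 2))
          (∑ ν ∈ Finset.Icc 1 n,
            (a n ν * x₀ ^ ν * (-x₀ * Real.sin (x₀ * r + ν * π / 2)) / r ^ (2 * n - ν)
              - a n ν * x₀ ^ ν * (↑(2 * n - ν) * Real.cos (x₀ * r + ν * π / 2))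
                / r ^ (2 * n - ν + 1))) r := by
        apply HasDerivAt.fun_sum
        intro ν hν
        simp only [Finset.mem_Icc] at hν
        exact hasDerivAt_aux (a n ν) (x₀ ^ ν) x₀ (ν * π / 2) r (2 * n - ν) (by omega) hrne
      simp only [Dr]
      rw [hev.deriv_eq, hD.deriv, Finset.mul_sum]
      have hterm : ∀ ν ∈ Finset.Icc 1 n,
          1 / r * (a n ν * x₀ ^ ν * (-x₀ * Real.sin (x₀ * r + ν * π / 2)) / r ^ (2 * n - ν)
              - a n ν * x₀ ^ ν * (↑(2 * n - ν) * Real.cos (x₀ * r + ν * π / 2))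
                / r ^ (2 * n - ν + 1))
          = (a n ((ν+1) - 1) * (x₀ ^ (ν+1) / r ^ (2 * (n+1) - (ν+1)))
                * Real.cos (x₀ * r + (ν+1 : ℕ) * π / 2))
            + (-(2 * (n:ℝ) - ν) *
                (a n ν * (x₀ ^ ν / r ^ (2 * (n+1) - ν)) * Real.cos (x₀ * r + ν * π / 2))) := by
        intro ν hν
        simp only [Finset.mem_Icc] at hν
        have e1 : 2 * (n+1) - (ν+1) = 2*n - ν + 1 := by omega
        have e2 : 2 * (n+1) - ν = 2*n - ν + 2 := by omega
        have e3 : (ν + 1) - 1 = ν := rfl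
        have hcast : ((2*n - ν : ℕ) : ℝ) = 2*(n:ℝ) - ν := by
          rw [Nat.cast_sub (by omega : ν ≤ 2*n)]; push_cast; ring
        have hcos : x₀ * r + ((ν+1 : ℕ) : ℝ) * π / 2 = (x₀ * r + ν * π / 2) + π / 2 := by
          push_cast; ring
        rw [e1, e2, e3, hcast, hcos, Real.cos_add_pi_div_two]
        have hp : r ^ (2*n - ν) ≠ 0 := pow_ne_zero _ hrne
        field_simp
        ring
      rw [Finset.sum_congr rfl hterm, Finset.sum_add_distrib,
        sum_shift n (fun μ => a n (μ - 1) * (x₀ ^ μ / r ^ (2 * (n+1) - μ))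
          * Real.cos (x₀ * r + μ * π / 2))]
      rw [Finset.sum_Icc_succ_top (a := 1) (b := n) (by omega),
        Finset.sum_Icc_succ_top (a := 2) (b := n) (by omega)]
      have hsplit : Finset.Icc 1 n = insert 1 (Finset.Icc 2 n) := by
        ext x; simp only [Finset.mem_Icc, Finset.mem_insert]; omega
      rw [hsplit, Finset.sum_insert (by simp), Finset.sum_insert (by simp)]
      have hmid : ∀ μ ∈ Finset.Icc 2 n,
          a (n+1) μ * (x₀ ^ μ / r ^ (2 * (n+1) - μ)) * Real.cos (x₀ * r + μ * π / 2)
          = a n (μ - 1) * (x₀ ^ μ / r ^ (2 * (n+1) - μ)) * Real.cos (x₀ * r + μ * π / 2)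
            + -(2 * (n:ℝ) - μ) *
                (a n μ * (x₀ ^ μ / r ^ (2 * (n+1) - μ)) * Real.cos (x₀ * r + μ * π / 2)) := by
        intro μ hμ
        simp only [Finset.mem_Icc] at hμ
        rw [harec n μ hμ.1 hμ.2]
        ring
      rw [Finset.sum_congr rfl hmid, Finset.sum_add_distrib]
      have hend : a (n+1) (n+1) = a n ((n+1) - 1) := by
        rw [hann (n+1) (by omega), show (n+1) - 1 = n from rfl, hann n hpos]
      have hone : a (n+1) 1 = -(2 * (n:ℝ) - 1) * a n 1 := by
        rw [ha1 (n+1) (by omega), ha1 n hpos]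
        have hdf : ((2 * (n+1) - 3)‼ : ℝ) = ((2*n-1) * (2*n-3)‼ : ℕ) := by
          rw [df_step n hpos]
        rw [hdf, Nat.cast_mul, Nat.cast_sub (by omega : 1 ≤ 2*n)]
        push_cast
        ring
      rw [hend, hone]
      ring
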